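/- arXiv:2207.04642 — 2 statements merged into one kernel-verified Lean document; each statement's English description precedes it below -/
import Mathlib

section
/- Let g be a vector space over a field K of characteristic 0 and π : ∧ⁿg → g an n-multilinear alternating map, viewed as an element of L_1. Then π defines an n-Lie bracket on g (i.e. π satisfies the Fundamental Identity π(x₁,…,x_{n−1},π(y₁,…,y_n)) = Σ_{i=1}^{n} π(y₁,…,y_{i−1},π(x₁,…,x_{n−1},y_i),y_{i+1},…,y_n)) if and only if [π,π]^{nLie} = 0. -/
open Finset

/-- The order-preserving inclusion `Fin (N-1) → Fin N` skipping the index `i`. -/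
def skipIdx {N : ℕ} (i : Fin N) (s : Fin (N - 1)) : Fin N :=
  if (s : ℕ) < (i : ℕ) then ⟨s, by have h1 := s.isLt; omega⟩
  else ⟨(s : ℕ) + 1, by have h1 := s.isLt; omega⟩

/-- `p`-cochains on `W` with values in `W` (blocks of `n-1` arguments, plus a final argument). -/
abbrev Cochain (W : Type*) (n p : ℕ) := (Fin p → (Fin (n - 1) → W)) → W → W

/-- The sign `(-1)^{(J,I)}` of the shuffle putting `J` before its complement. -/
def shuffleSign {N : ℕ} (J : Finset (Fin N)) : ℤ :=
  (-1) ^ ((∑ x ∈ J, (x : ℕ)) + ∑ a ∈ Finset.range J.card, a)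

variable {W : Type*} [AddCommGroup W]

/-- The composition `α ∘ β` of cochains, given by the shuffle-sum insertion formula. -/
def ncomp (n p q : ℕ) (α : Cochain W n p) (β : Cochain W n q) : Cochain W n (p + q) :=
  fun X z =>
    ∑ J ∈ Finset.powersetCard (q + 1) (Finset.univ : Finset (Fin (p + q + 1))),
      if hJ : J.card = q + 1 then
        (fun (eJ : Fin (q + 1) → Fin (p + q + 1)) (eI : Fin p → Fin (p + q + 1))
             (X' : Fin (p + q + 1) → Fin (n - 1) → W) =>
          shuffleSign J •
            (if (⟨p + q, by omega⟩ : Fin (p + q + 1)) ∈ J then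
              ((-1 : ℤ) ^ p) • α (fun t => X' (eI t)) (β (fun a => X' (eJ a.castSucc)) z)
            else
              ((-1 : ℤ) ^ ((Jᶜ.filter (fun i => i < eJ (Fin.last q))).card)) •
                ∑ s : Fin (n - 1),
                  α (fun t =>
                      if (t : ℕ) < (Jᶜ.filter (fun i => i < eJ (Fin.last q))).card then
                        X' (eI t)
                      else if (t : ℕ) = (Jᶜ.filter (fun i => i < eJ (Fin.last q))).card then
                        Function.update (X' (eJ (Fin.last q))) s
                          (β (fun a => X' (eJ a.castSucc)) (X' (eJ (Fin.last q)) s))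
                      else X' (eI ⟨(t : ℕ) - 1, by have := t.isLt; omega⟩)) z))
          (fun a => J.orderEmbOfFin hJ a)
          (fun t => Jᶜ.orderEmbOfFin (by rw [Finset.card_compl, hJ, Fintype.card_fin]; omega) t)
          (fun j => if h : (j : ℕ) < p + q then X ⟨j, h⟩ else 0)
      else 0

/-- The graded commutator bracket `[α,β] = (-1)^{pq} α∘β - β∘α`. -/
def nbracket (n p q : ℕ) (α : Cochain W n p) (β : Cochain W n q) : Cochain W n (p + q) :=
  fun X z => ((-1 : ℤ) ^ (p * q)) • ncomp n p q α β X z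
    - ncomp n q p β α (fun i => X (Fin.cast (by omega : q + p = p + q) i)) z

/-- Append a final element to a block of `n-1` elements, giving an `n`-tuple. -/
def tupSnoc {A : Type*} {n : ℕ} (X : Fin (n - 1) → A) (z : A) : Fin n → A :=
  fun t => if h : (t : ℕ) < n - 1 then X ⟨t, h⟩ else z

/-- Append a final element to `n-2` elements, giving an `(n-1)`-tuple. -/
def tupSnoc2 {A : Type*} {n : ℕ} (X : Fin (n - 2) → A) (z : A) : Fin (n - 1) → A :=
  fun t => if h : (t : ℕ) < n - 2 then X ⟨t, h⟩ else z

/-- From a block `y` of `n-1` elements, delete the entry at `s` and append `z`. -/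
def hatSnoc {A : Type*} {n : ℕ} (y : Fin (n - 1) → A) (s : Fin (n - 1)) (z : A) :
    Fin (n - 1) → A :=
  fun t => if h : (t : ℕ) < n - 2 then y (skipIdx s ⟨t, by omega⟩) else z

variable {K : Type*} [Field K] [CharZero K]
variable {g : Type*} [AddCommGroup g] [Module K g]
variable {V : Type*} [AddCommGroup V] [Module K V]

/-- The Fundamental (Filippov) Identity for an alternating `n`-multilinear bracket. -/
def FI {n : ℕ} (br : AlternatingMap K g g (Fin n)) : Prop :=
  ∀ (x : Fin (n - 1) → g) (y : Fin n → g),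
    br (tupSnoc x (br y)) = ∑ i : Fin n, br (Function.update y i (br (tupSnoc x (y i))))

/-- An `n`-ary bracket viewed as a `1`-cochain. -/
def toCochain {n : ℕ} (br : AlternatingMap K g g (Fin n)) : Cochain g n 1 :=
  fun X z => br (tupSnoc (X 0) z)

/-- The coboundary operator `δ_ρ` associated to a representation `ρ` of an `n`-Lie algebra. -/
def delta {n : ℕ} (p : ℕ) (br : AlternatingMap K g g (Fin n))
    (ρr : (Fin (n - 1) → g) → V → V)
    (α : (Fin p → (Fin (n - 1) → g)) → g → V) :
    (Fin (p + 1) → (Fin (n - 1) → g)) → g → V :=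
  fun χ z =>
    (∑ i : Fin (p + 1), ∑ k : Fin (p + 1),
      if (i : ℕ) < (k : ℕ) then
        ((-1 : ℤ) ^ ((i : ℕ) + 1)) • ∑ j : Fin (n - 1),
          α (fun t => if skipIdx i t = k
              then Function.update (χ k) j (br (tupSnoc (χ i) (χ k j)))
              else χ (skipIdx i t)) z
      else 0)
    + ∑ i : Fin (p + 1), ((-1 : ℤ) ^ ((i : ℕ) + 1)) •
        α (fun t => χ (skipIdx i t)) (br (tupSnoc (χ i) z))
    + ∑ i : Fin (p + 1), ((-1 : ℤ) ^ (i : ℕ)) •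
        ρr (χ i) (α (fun t => χ (skipIdx i t)) z)
    + ∑ i : Fin (n - 1), ((-1 : ℤ) ^ (n + p + 1 - (i : ℕ))) •
        ρr (fun s => if hs : (s : ℕ) < n - 2 then χ (Fin.last p) (skipIdx i ⟨s, by omega⟩) else z)
          (α (fun t => χ t.castSucc) (χ (Fin.last p) i))

/-- The `1`-cochain `π + ρ̄ + θ̄` on `g ⊕ V` built from the bracket and a generalized
representation. -/
def Dmap {n : ℕ} (br : AlternatingMap K g g (Fin n))
    (ρ : AlternatingMap K g (Module.End K V) (Fin (n - 1)))
    (θ : g →ₗ[K] (AlternatingMap K V V (Fin (n - 1)))) : Cochain (g × V) n 1 :=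
  fun X z =>
    (br (fun t => (tupSnoc (X 0) z t).1),
      (∑ i : Fin n, ((-1 : ℤ) ^ (n - 1 - (i : ℕ))) •
        ρ (fun s => (tupSnoc (X 0) z (skipIdx i s)).1) ((tupSnoc (X 0) z i).2))
      + ∑ i : Fin n, ((-1 : ℤ) ^ (n - 1 - (i : ℕ))) •
        θ ((tupSnoc (X 0) z i).1) (fun s => (tupSnoc (X 0) z (skipIdx i s)).2))

/-- `(V;ρ,θ)` is a generalized representation: `[π+ρ̄+θ̄, π+ρ̄+θ̄] = 0`. -/
def IsGenRep {n : ℕ} (br : AlternatingMap K g g (Fin n))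
    (ρ : AlternatingMap K g (Module.End K V) (Fin (n - 1)))
    (θ : g →ₗ[K] (AlternatingMap K V V (Fin (n - 1)))) : Prop :=
  ∀ X z, nbracket n 1 1 (Dmap br ρ θ) (Dmap br ρ θ) X z = 0

/-- A cochain on `g ⊕ V` is valued in `V`. -/
def ValuedInV {n p : ℕ} (α : Cochain (g × V) n p) : Prop := ∀ X z, (α X z).1 = 0

/-- A cochain on `g ⊕ V` vanishes when all arguments lie in `V`. -/
def VanishOnV {n p : ℕ} (α : Cochain (g × V) n p) : Prop :=
  ∀ (u : Fin p → Fin (n - 1) → V) (v : V),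
    α (fun i s => ((0 : g), u i s)) ((0 : g), v) = 0

/-- A cochain on `g` with values in `V`, extended to `g ⊕ V` (the summand inclusion
`C^p(g;V) ⊆ C^p_>(g⊕V,V)`). -/
def extGV {n p : ℕ} (α : (Fin p → (Fin (n - 1) → g)) → g → V) : Cochain (g × V) n p :=
  fun X z => (0, α (fun i s => (X i s).1) z.1)

/-- A linear map `g → V` viewed as a `1`-cochain in `C^0_>(g⊕V,V)`. -/
def ext0 {n : ℕ} (α : g →ₗ[K] V) : Cochain (g × V) n 0 := fun _ z => ((0 : g), α z.1)

/-- `β₃ ∈ Hom(∧ⁿ g, V)` viewed as a `2`-cochain in `C^1_>(g⊕V,V)`. -/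
def ext3 {n : ℕ} (β₃ : AlternatingMap K g V (Fin n)) : Cochain (g × V) n 1 :=
  fun X z => (0, β₃ (fun t => (tupSnoc (X 0) z t).1))

/-- `β₂ ∈ Hom(∧^{n-1} g ∧ V, V)` viewed as a `2`-cochain in `C^1_>(g⊕V,V)`. -/
def ext2 {n : ℕ} (β₂ : AlternatingMap K g (Module.End K V) (Fin (n - 1))) :
    Cochain (g × V) n 1 :=
  fun X z => (0, ∑ i : Fin n, ((-1 : ℤ) ^ (n - 1 - (i : ℕ))) •
    β₂ (fun s => (tupSnoc (X 0) z (skipIdx i s)).1) ((tupSnoc (X 0) z i).2))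

/-- The value of (the extension of) `β₁ ∈ Hom(∧^{n-1} V ∧ g, V)` on an `n`-tuple in `g ⊕ V`. -/
def ext1raw {n : ℕ} (β₁ : AlternatingMap K V (g →ₗ[K] V) (Fin (n - 1)))
    (w : Fin n → g × V) : V :=
  ∑ i : Fin n, ((-1 : ℤ) ^ (n - 1 - (i : ℕ))) • β₁ (fun s => (w (skipIdx i s)).2) ((w i).1)

/-- `β₁ ∈ Hom(∧^{n-1} V ∧ g, V)` viewed as a `2`-cochain in `C^1_>(g⊕V,V)`. -/
def ext1 {n : ℕ} (β₁ : AlternatingMap K V (g →ₗ[K] V) (Fin (n - 1))) :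
    Cochain (g × V) n 1 :=
  fun X z => (0, ext1raw β₁ (tupSnoc (X 0) z))

/-- A block of `g`-elements in `g ⊕ V`. -/
def gBlock {n : ℕ} (x : Fin (n - 1) → g) : Fin (n - 1) → g × V := fun s => (x s, 0)

/-- A block of `V`-elements in `g ⊕ V`. -/
def vBlock {n : ℕ} (u : Fin (n - 1) → V) : Fin (n - 1) → g × V := fun s => ((0 : g), u s)

set_option linter.unusedSectionVars false

lemma key (n : ℕ) (br : AlternatingMap K g g (Fin n)) (X : Fin 2 → Fin (n - 1) → g) (z : g) :
    ncomp n 1 1 (toCochain br) (toCochain br) X z =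
      (∑ s : Fin (n-1), br (tupSnoc (Function.update (X 1) s (br (tupSnoc (X 0) (X 1 s)))) z))
      + br (tupSnoc (X 1) (br (tupSnoc (X 0) z)))
      - br (tupSnoc (X 0) (br (tupSnoc (X 1) z))) := by
  rw [ncomp]
  rw [show (Finset.powersetCard (1+1) (Finset.univ : Finset (Fin (1+1+1)))) =
    {{0,1},{0,2},{1,2}} from by decide]
  rw [Finset.sum_insert (by decide), Finset.sum_insert (by decide), Finset.sum_singleton]
  rw [dif_pos (show ({0,1} : Finset (Fin (1+1+1))).card = 1+1 from by decide),
      dif_pos (show ({0,2} : Finset (Fin (1+1+1))).card = 1+1 from by decide),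
      dif_pos (show ({1,2} : Finset (Fin (1+1+1))).card = 1+1 from by decide)]
  beta_reduce
  rw [(Finset.orderEmbOfFin_unique (show ({0,1} : Finset (Fin (1+1+1))).card = 1+1 from by decide)
        (f := ![0,1]) (by decide) (by decide)).symm,
      (Finset.orderEmbOfFin_unique (show (({0,1} : Finset (Fin (1+1+1)))ᶜ).card = 1 from by decide)
        (f := ![2]) (by decide) (by decide)).symm,
      (Finset.orderEmbOfFin_unique (show ({0,2} : Finset (Fin (1+1+1))).card = 1+1 from by decide)
        (f := ![0,2]) (by decide) (by decide)).symm,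
      (Finset.orderEmbOfFin_unique (show (({0,2} : Finset (Fin (1+1+1)))ᶜ).card = 1 from by decide)
        (f := ![1]) (by decide) (by decide)).symm,
      (Finset.orderEmbOfFin_unique (show ({1,2} : Finset (Fin (1+1+1))).card = 1+1 from by decide)
        (f := ![1,2]) (by decide) (by decide)).symm,
      (Finset.orderEmbOfFin_unique (show (({1,2} : Finset (Fin (1+1+1)))ᶜ).card = 1 from by decide)
        (f := ![0]) (by decide) (by decide)).symm]
  simp only [toCochain, show (Fin.last 1) = (1:Fin (1+1)) from rfl,
    Matrix.cons_val_one, Matrix.head_cons, Matrix.cons_val_zero, Matrix.cons_val_fin_one,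
    Fin.castSucc_zero,
    show ((0:Fin (1+1+1)):ℕ) = 0 from rfl, show ((1:Fin (1+1+1)):ℕ) = 1 from rfl,
    show ((2:Fin (1+1+1)):ℕ) = 2 from rfl,
    show ((0:Fin 1):ℕ) = 0 from rfl,
    show (⟨1+1, by omega⟩ : Fin (1+1+1)) ∈ ({0,1} : Finset (Fin (1+1+1))) ↔ False from by decide,
    show (⟨1+1, by omega⟩ : Fin (1+1+1)) ∈ ({0,2} : Finset (Fin (1+1+1))) ↔ True from by decide,
    show (⟨1+1, by omega⟩ : Fin (1+1+1)) ∈ ({1,2} : Finset (Fin (1+1+1))) ↔ True from by decide,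
    show #(Finset.filter (fun i => i < (1 : Fin (1+1+1))) ({0,1}ᶜ : Finset (Fin (1+1+1)))) = 0 from by decide,
    show shuffleSign ({0,1} : Finset (Fin (1+1+1))) = 1 from by decide,
    show shuffleSign ({0,2} : Finset (Fin (1+1+1))) = -1 from by decide,
    show shuffleSign ({1,2} : Finset (Fin (1+1+1))) = 1 from by decide,
    if_true, if_false, Fin.mk_zero, Fin.mk_one,
    one_smul, neg_smul, pow_one, neg_neg]
  norm_num
  abel

lemma tupSnoc_castSucc {A : Type*} {m : ℕ} (y : Fin m → A) (z : A) (s : Fin m) :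
    tupSnoc (n := m+1) y z s.castSucc = y s := by
  rw [tupSnoc, dif_pos (show ((s.castSucc : ℕ)) < m+1-1 from s.isLt)]
  exact congrArg y (Fin.ext rfl)

lemma tupSnoc_last {A : Type*} {m : ℕ} (y : Fin m → A) (z : A) :
    tupSnoc (n := m+1) y z (Fin.last m) = z := by
  rw [tupSnoc, dif_neg]
  simp [Fin.last]

lemma update_tupSnoc_castSucc {A : Type*} {m : ℕ} (y : Fin m → A) (z : A) (s : Fin m) (v : A) :
    Function.update (tupSnoc (n := m+1) y z) s.castSucc v
      = tupSnoc (n := m+1) (Function.update y s v) z := by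
  funext t
  rcases eq_or_ne t s.castSucc with rfl | h
  · rw [Function.update_self, tupSnoc_castSucc, Function.update_self]
  · rw [Function.update_of_ne h]
    by_cases ht : (t : ℕ) < m
    · rw [tupSnoc, dif_pos (show (t:ℕ) < m+1-1 from ht), tupSnoc,
        dif_pos (show (t:ℕ) < m+1-1 from ht), Function.update_of_ne]
      intro hc
      exact h (by apply Fin.ext; simpa using congrArg Fin.val hc)
    · rw [tupSnoc, dif_neg (show ¬ (t:ℕ) < m+1-1 from ht), tupSnoc,
        dif_neg (show ¬ (t:ℕ) < m+1-1 from ht)]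

lemma update_tupSnoc_last {A : Type*} {m : ℕ} (y : Fin m → A) (z : A) (v : A) :
    Function.update (tupSnoc (n := m+1) y z) (Fin.last m) v = tupSnoc (n := m+1) y v := by
  funext t
  rcases eq_or_ne t (Fin.last m) with rfl | h
  · rw [Function.update_self, tupSnoc_last]
  · have ht : (t : ℕ) < m := by
      have := t.isLt
      have : (t : ℕ) ≠ m := fun hc => h (Fin.ext (by simpa using hc))
      omega
    rw [Function.update_of_ne h, tupSnoc, dif_pos (show (t:ℕ) < m+1-1 from ht), tupSnoc,
      dif_pos (show (t:ℕ) < m+1-1 from ht)]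

lemma sum_split (m : ℕ) (br : AlternatingMap K g g (Fin (m+1))) (x w : Fin m → g) (z : g) :
    ∑ i : Fin (m+1), br (Function.update (tupSnoc (n := m+1) w z) i
        (br (tupSnoc (n := m+1) x (tupSnoc (n := m+1) w z i)))) =
      (∑ s : Fin m, br (tupSnoc (n := m+1) (Function.update w s (br (tupSnoc (n := m+1) x (w s)))) z))
        + br (tupSnoc (n := m+1) w (br (tupSnoc (n := m+1) x z))) := by
  rw [Fin.sum_univ_castSucc]
  congr 1
  · refine Finset.sum_congr rfl fun s _ => ?_
    rw [tupSnoc_castSucc, update_tupSnoc_castSucc]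
  · rw [tupSnoc_last, update_tupSnoc_last]

lemma key' (m : ℕ) (br : AlternatingMap K g g (Fin (m+1))) (X : Fin 2 → Fin m → g) (z : g) :
    ncomp (m+1) 1 1 (toCochain br) (toCochain br) X z =
      (∑ s : Fin m, br (tupSnoc (n := m+1) (Function.update (X 1) s
          (br (tupSnoc (n := m+1) (X 0) (X 1 s)))) z))
      + br (tupSnoc (n := m+1) (X 1) (br (tupSnoc (n := m+1) (X 0) z)))
      - br (tupSnoc (n := m+1) (X 0) (br (tupSnoc (n := m+1) (X 1) z))) :=
  key (m+1) br X z

lemma neg_two_smul_eq_zero' {K : Type*} [Field K] [CharZero K] {g : Type*}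
    [AddCommGroup g] [Module K g] {v : g} (h : (-2 : ℤ) • v = 0) : v = 0 := by
  have h2 : ((-2 : ℤ) : K) • v = 0 := by rw [Int.cast_smul_eq_zsmul]; exact h
  rcases smul_eq_zero.mp h2 with h' | h'
  · exfalso; norm_num at h'
  · exact h'


/- STATEMENT 1 -/
theorem stmt1 (K : Type*) [Field K] [CharZero K] (g : Type*) [AddCommGroup g] [Module K g]
    (n : ℕ) (hn : 2 ≤ n) (br : AlternatingMap K g g (Fin n)) :
    FI br ↔ ∀ (X : Fin 2 → Fin (n - 1) → g) (z : g),
      nbracket n 1 1 (toCochain br) (toCochain br) X z = 0 := by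
  obtain ⟨m, rfl⟩ : ∃ m, n = m + 1 := ⟨n - 1, by omega⟩
  have hb : ∀ (X : Fin 2 → Fin (m + 1 - 1) → g) (z : g),
      nbracket (m+1) 1 1 (toCochain br) (toCochain br) X z
        = (-2 : ℤ) • ncomp (m+1) 1 1 (toCochain br) (toCochain br) X z := by
    intro X z
    rw [nbracket]
    have hX : (fun i => X (Fin.cast (by omega : 1 + 1 = 1 + 1) i)) = X :=
      funext fun i => congrArg X (Fin.ext rfl)
    rw [hX]
    norm_num
    abel
  constructor
  · intro hFI X z
    rw [hb, key']
    have hA := hFI (X 0) (tupSnoc (X 1) z)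
    rw [sum_split] at hA
    rw [hA, sub_self, smul_zero]
  · intro h x y
    have h2 := h ![x, fun s => y (Fin.castSucc s)] (y (Fin.last m))
    rw [hb, key'] at h2
    simp only [Matrix.cons_val_zero, Matrix.cons_val_one, Matrix.head_cons] at h2
    have hy : tupSnoc (n := m+1) (fun s => y s.castSucc) (y (Fin.last m)) = y := by
      funext t
      induction t using Fin.lastCases with
      | last => exact tupSnoc_last _ _
      | cast s => exact tupSnoc_castSucc _ _ s
    rw [hy] at h2
    have h3 := neg_two_smul_eq_zero' (K := K) h2
    have h4 := sub_eq_zero.mp h3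
    rw [← sum_split m br x (fun s : Fin (m+1-1) => y s.castSucc) (y (Fin.last m)), hy] at h4
    exact h4.symm
end

section
/- Let g be an n-Lie algebra over a field K of characteristic 0 with bracket π, and let (V;ρ,θ) be a generalized representation of g. Then for every p ≥ 0, taking the graded commutator bracket of π + ρ̄ + θ̄ with elements of C^p_>(g⊕V,V) lands in C^{p+1}_>(g⊕V,V): [π + ρ̄ + θ̄, C^p_>(g⊕V,V)]^{nLie} ⊆ C^{p+1}_>(g⊕V,V). -/
open Finset

variable {W : Type*} [AddCommGroup W]

variable {K : Type*} [Field K] [CharZero K]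
variable {g : Type*} [AddCommGroup g] [Module K g]
variable {V : Type*} [AddCommGroup V] [Module K V]

section stmt4aux

variable {K : Type*} [Field K] [CharZero K]
variable {g : Type*} [AddCommGroup g] [Module K g]
variable {V : Type*} [AddCommGroup V] [Module K V]

private lemma zsmul_eq_zero' {A : Type*} [AddCommGroup A] (c : ℤ) {x : A} (h : x = 0) :
    c • x = 0 := by rw [h, smul_zero]

lemma aux_tupSnoc_fst {n : ℕ} (X : Fin (n-1) → g × V) (z : g × V)
    (hX : ∀ s, (X s).1 = 0) (hz : z.1 = 0) : ∀ t : Fin n, (tupSnoc X z t).1 = 0 := by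
  intro t; unfold tupSnoc; split
  · exact hX _
  · exact hz

lemma aux_Dmap_vanish {n : ℕ} (hn : 2 ≤ n) (br : AlternatingMap K g g (Fin n))
    (ρ : AlternatingMap K g (Module.End K V) (Fin (n - 1)))
    (θ : g →ₗ[K] (AlternatingMap K V V (Fin (n - 1))))
    (X : Fin 1 → Fin (n-1) → g × V) (z : g × V)
    (hX : ∀ s, (X 0 s).1 = 0) (hz : z.1 = 0) :
    Dmap br ρ θ X z = 0 := by
  have key := aux_tupSnoc_fst (X 0) z hX hz
  unfold Dmap
  rw [Prod.mk_eq_zero]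
  refine ⟨br.map_coord_zero ⟨0, by omega⟩ (key _), ?_⟩
  have hρ : ∀ i : Fin n, ρ (fun s => (tupSnoc (X 0) z (skipIdx i s)).1) = 0 := fun i =>
    ρ.map_coord_zero ⟨0, by omega⟩ (key _)
  have hθ : ∀ i : Fin n,
      θ ((tupSnoc (X 0) z i).1) = (0 : AlternatingMap K V V (Fin (n-1))) := fun i => by
    rw [key, map_zero]
  simp [hρ, hθ]

lemma aux_vanish_apply {n p : ℕ} (α : Cochain (g × V) n p) (h2 : VanishOnV α)
    (X : Fin p → Fin (n-1) → g × V) (z : g × V)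
    (hX : ∀ i s, (X i s).1 = 0) (hz : z.1 = 0) : α X z = 0 := by
  have hXe : X = fun i s => ((0:g), (X i s).2) := by
    funext i s; exact Prod.ext (hX i s) rfl
  have hze : z = ((0:g), z.2) := Prod.ext hz rfl
  rw [hXe, hze]; exact h2 _ _

lemma aux_Dmap_fst_last {n : ℕ} (hn : 2 ≤ n) (br : AlternatingMap K g g (Fin n))
    (ρ : AlternatingMap K g (Module.End K V) (Fin (n - 1)))
    (θ : g →ₗ[K] (AlternatingMap K V V (Fin (n - 1))))
    (X : Fin 1 → Fin (n-1) → g × V) (z : g × V) (hz : z.1 = 0) :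
    (Dmap br ρ θ X z).1 = 0 := by
  have h : (tupSnoc (X 0) z ⟨n-1, by omega⟩).1 = 0 := by
    unfold tupSnoc
    rw [dif_neg (by simp)]
    exact hz
  exact br.map_coord_zero ⟨n-1, by omega⟩ h

lemma aux_Dmap_fst_mid {n : ℕ} (br : AlternatingMap K g g (Fin n))
    (ρ : AlternatingMap K g (Module.End K V) (Fin (n - 1)))
    (θ : g →ₗ[K] (AlternatingMap K V V (Fin (n - 1))))
    (X : Fin 1 → Fin (n-1) → g × V) (z : g × V) (s : Fin (n-1))
    (hs : (X 0 s).1 = 0) : (Dmap br ρ θ X z).1 = 0 := by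
  have h : (tupSnoc (X 0) z ⟨(s:ℕ), by have := s.isLt; omega⟩).1 = 0 := by
    unfold tupSnoc
    rw [dif_pos s.2]
    exact hs
  exact br.map_coord_zero _ h

lemma aux_filter_card (p : ℕ) (J : Finset (Fin (1 + p + 1))) (hJ : J.card = p + 1)
    (hmem : (⟨1 + p, by omega⟩ : Fin (1 + p + 1)) ∉ J) :
    (Jᶜ.filter (fun i => i < J.orderEmbOfFin hJ (Fin.last p))).card = 0 := by
  rw [Finset.card_eq_zero, Finset.filter_eq_empty_iff]
  intro i hi
  have hcard : Jᶜ.card = 1 := by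
    rw [Finset.card_compl, hJ, Fintype.card_fin]; omega
  obtain ⟨a, ha⟩ := Finset.card_eq_one.mp hcard
  have h1 : i = a := by rw [ha] at hi; simpa using hi
  have h2 : (⟨1 + p, by omega⟩ : Fin (1+p+1)) = a := by
    have := Finset.mem_compl.mpr hmem
    rw [ha] at this; simpa using this
  subst h1
  rw [← h2]
  intro hlt
  have hlt' : (1 + p : ℕ) < ((J.orderEmbOfFin hJ (Fin.last p)) : ℕ) := hlt
  have := (J.orderEmbOfFin hJ (Fin.last p)).isLt
  omega

lemma aux_fst_ncompD {n p : ℕ} (hn : 2 ≤ n) (br : AlternatingMap K g g (Fin n))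
    (ρ : AlternatingMap K g (Module.End K V) (Fin (n - 1)))
    (θ : g →ₗ[K] (AlternatingMap K V V (Fin (n - 1))))
    (α : Cochain (g × V) n p) (h1 : ValuedInV α)
    (X : Fin (1 + p) → Fin (n-1) → g × V) (z : g × V) :
    (ncomp n 1 p (Dmap br ρ θ) α X z).1 = 0 := by
  unfold ncomp
  rw [Prod.fst_sum]
  apply Finset.sum_eq_zero
  intro J hJmem
  rw [Finset.mem_powersetCard] at hJmem
  rw [dif_pos hJmem.2]
  beta_reduce
  rw [Prod.smul_fst]
  split
  · rw [Prod.smul_fst, aux_Dmap_fst_last hn br ρ θ _ _ (h1 _ _), smul_zero, smul_zero]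
  case isFalse hmem =>
    have hc := aux_filter_card p J hJmem.2 hmem
    rw [Prod.smul_fst, Prod.fst_sum]
    refine zsmul_eq_zero' _ (zsmul_eq_zero' _ (Finset.sum_eq_zero fun s _ => ?_))
    refine aux_Dmap_fst_mid br ρ θ _ _ s ?_
    simp only [hc]
    rw [if_neg (by simp), if_pos (show ((0 : Fin 1) : ℕ) = 0 from rfl), Function.update_self]
    exact h1 _ _

lemma aux_fst_ncompA {n p : ℕ} (β : Cochain (g × V) n 1) (α : Cochain (g × V) n p)
    (h1 : ValuedInV α) (X : Fin (p + 1) → Fin (n-1) → g × V) (z : g × V) :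
    (ncomp n p 1 α β X z).1 = 0 := by
  unfold ncomp
  rw [Prod.fst_sum]
  apply Finset.sum_eq_zero
  intro J hJmem
  rw [Finset.mem_powersetCard] at hJmem
  rw [dif_pos hJmem.2]
  beta_reduce
  rw [Prod.smul_fst]
  split
  · rw [Prod.smul_fst, h1, smul_zero, smul_zero]
  · rw [Prod.smul_fst, Prod.fst_sum]
    refine zsmul_eq_zero' _ (zsmul_eq_zero' _ (Finset.sum_eq_zero fun s _ => ?_))
    exact h1 _ _

lemma aux_van_ncompD {n p : ℕ} (hn : 2 ≤ n) (br : AlternatingMap K g g (Fin n))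
    (ρ : AlternatingMap K g (Module.End K V) (Fin (n - 1)))
    (θ : g →ₗ[K] (AlternatingMap K V V (Fin (n - 1))))
    (α : Cochain (g × V) n p) (h1 : ValuedInV α)
    (X : Fin (1 + p) → Fin (n-1) → g × V) (z : g × V)
    (hX : ∀ i s, (X i s).1 = 0) (hz : z.1 = 0) :
    ncomp n 1 p (Dmap br ρ θ) α X z = 0 := by
  unfold ncomp
  apply Finset.sum_eq_zero
  intro J hJmem
  rw [Finset.mem_powersetCard] at hJmem
  rw [dif_pos hJmem.2]
  beta_reduce
  have hX' : ∀ (j : Fin (1 + p + 1)) (s : Fin (n - 1)),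
      ((if h : (j : ℕ) < 1 + p then X ⟨(j : ℕ), h⟩ else 0) s).1 = 0 := by
    intro j s; split
    · exact hX _ _
    · rfl
  refine zsmul_eq_zero' _ ?_
  split
  · refine zsmul_eq_zero' _ ?_
    exact aux_Dmap_vanish hn br ρ θ _ _ (fun s => hX' _ s) (h1 _ _)
  · refine zsmul_eq_zero' _ (Finset.sum_eq_zero fun s _ => ?_)
    refine aux_Dmap_vanish hn br ρ θ _ _ ?_ hz
    intro s'
    split
    · exact hX' _ _
    split
    · rcases eq_or_ne s' s with rfl | hne
      · rw [Function.update_self]; exact h1 _ _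
      · rw [Function.update_of_ne hne]; exact hX' _ _
    · exact hX' _ _

lemma aux_van_ncompA {n p : ℕ} (hn : 2 ≤ n) (br : AlternatingMap K g g (Fin n))
    (ρ : AlternatingMap K g (Module.End K V) (Fin (n - 1)))
    (θ : g →ₗ[K] (AlternatingMap K V V (Fin (n - 1))))
    (α : Cochain (g × V) n p) (h2 : VanishOnV α)
    (X : Fin (p + 1) → Fin (n-1) → g × V) (z : g × V)
    (hX : ∀ i s, (X i s).1 = 0) (hz : z.1 = 0) :
    ncomp n p 1 α (Dmap br ρ θ) X z = 0 := by
  unfold ncomp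
  apply Finset.sum_eq_zero
  intro J hJmem
  rw [Finset.mem_powersetCard] at hJmem
  rw [dif_pos hJmem.2]
  beta_reduce
  have hX' : ∀ (j : Fin (p + 1 + 1)) (s : Fin (n - 1)),
      ((if h : (j : ℕ) < p + 1 then X ⟨(j : ℕ), h⟩ else 0) s).1 = 0 := by
    intro j s; split
    · exact hX _ _
    · rfl
  refine zsmul_eq_zero' _ ?_
  split
  · refine zsmul_eq_zero' _ ?_
    refine aux_vanish_apply α h2 _ _ (fun i s => hX' _ _) ?_
    rw [aux_Dmap_vanish hn br ρ θ _ _ (fun s => hX' _ s) hz]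
    rfl
  · refine zsmul_eq_zero' _ (Finset.sum_eq_zero fun s _ => ?_)
    refine aux_vanish_apply α h2 _ _ ?_ hz
    intro t s'
    split
    · exact hX' _ _
    split
    · rcases eq_or_ne s' s with rfl | hne
      · rw [Function.update_self,
          aux_Dmap_vanish hn br ρ θ _ _ (fun s'' => hX' _ s'') (hX' _ _)]
        rfl
      · rw [Function.update_of_ne hne]; exact hX' _ _
    · exact hX' _ _

end stmt4aux

/- STATEMENT 4 -/
theorem stmt4 (K : Type*) [Field K] [CharZero K] (g V : Type*) [AddCommGroup g] [Module K g]
    [AddCommGroup V] [Module K V] (n : ℕ) (hn : 2 ≤ n)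
    (br : AlternatingMap K g g (Fin n)) (hbr : FI br)
    (ρ : AlternatingMap K g (Module.End K V) (Fin (n - 1)))
    (θ : g →ₗ[K] (AlternatingMap K V V (Fin (n - 1)))) (hrep : IsGenRep br ρ θ)
    (p : ℕ) (α : Cochain (g × V) n p) (h1 : ValuedInV α) (h2 : VanishOnV α) :
    ValuedInV (nbracket n 1 p (Dmap br ρ θ) α)
      ∧ VanishOnV (nbracket n 1 p (Dmap br ρ θ) α) := by
  constructor
  · intro X z
    unfold nbracket
    rw [Prod.fst_sub, Prod.smul_fst, aux_fst_ncompD hn br ρ θ α h1 X z,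
      aux_fst_ncompA (Dmap br ρ θ) α h1 _ z, smul_zero, sub_zero]
  · intro u v
    unfold nbracket
    rw [aux_van_ncompD hn br ρ θ α h1 _ _ (fun _ _ => rfl) rfl,
      aux_van_ncompA hn br ρ θ α h2 _ _ (fun _ _ => rfl) rfl, smul_zero, sub_zero]
end
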